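/- Let n ≥ 1 and let k ≥ 1 be such that Φ_{2(k-1)} ≤ n < Φ_{2k}. Then the maximum rank of a Zimin pattern that embeds in the prefix F_∞[1..n] of the infinite Fibonacci word equals k; moreover this maximum is attained on the prefix F_{2(k-1)}, whose Zimin type is k. -/

import Mathlib

open List Filter

/-- The Zimin pattern `Z_k` as a word over variables `0, 1, ..., k-1`
(`Z_0` is empty, `Z_{k+1} = Z_k · x_{k+1} · Z_k`). -/
def ziminWord : ℕ → List ℕ
  | 0 => []
  | k + 1 => ziminWord k ++ k :: ziminWord k

/-- `w` is the image of the Zimin pattern `Z_k` under a non-erasing morphism. -/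
def IsZiminImage {α : Type*} (k : ℕ) (w : List α) : Prop :=
  ∃ h : ℕ → List α, (∀ i, h i ≠ []) ∧ w = (ziminWord k).flatMap h

/-- The Zimin type of `w`: the maximum `k` such that `w` is an image of `Z_k`
under a non-erasing morphism (0 for the empty word). -/
noncomputable def ziminType {α : Type*} (w : List α) : ℕ :=
  sSup {k | IsZiminImage k w}

/-- The Zimin pattern `Z_k` embeds in `w`: some factor of `w` is an image of `Z_k`. -/
def ziminEmbeds {α : Type*} (k : ℕ) (w : List α) : Prop :=
  ∃ u : List α, u <:+: w ∧ IsZiminImage k u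

/-- Length of the longest border (proper prefix that is also a proper suffix) of `w`. -/
noncomputable def bordLen {α : Type*} (w : List α) : ℕ :=
  sSup {j | w.take j <:+ w ∧ j < w.length}

/-- Length of the longest short border (border of length `< |w|/2`) of `w`. -/
noncomputable def shortBordLen {α : Type*} (w : List α) : ℕ :=
  sSup {j | w.take j <:+ w ∧ 2 * j < w.length}

/-- The longest border of `w`. -/
noncomputable def bord {α : Type*} (w : List α) : List α := w.take (bordLen w)

/-- The longest short border of `w`. -/
noncomputable def shortBord {α : Type*} (w : List α) : List α := w.take (shortBordLen w)

/-- The Fibonacci words over `Bool` (`a = false`, `b = true`), with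
`fibWord 0 = F_0 = a`, `fibWord 1 = F_1 = F_0 F_{-1} = ab`, `F_{n} = F_{n-1} F_{n-2}`. -/
def fibWord : ℕ → List Bool
  | 0 => [false]
  | 1 => [false, true]
  | n + 2 => fibWord (n + 1) ++ fibWord n

/-- The Fibonacci numbers `Φ_n = |F_n|` (`Φ_0 = 1, Φ_1 = 2, Φ_2 = 3, ...`). -/
def Phi (n : ℕ) : ℕ := (fibWord n).length

/-- The infinite Fibonacci word `F_∞` (0-indexed letters). -/
def fibInf (i : ℕ) : Bool := (fibWord (i + 2)).getD i false

/-- The prefix `F_∞[1..n]` of the infinite Fibonacci word. -/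
def fibPrefix (n : ℕ) : List Bool := (List.range n).map fibInf


namespace ZFib

lemma phi0 : Phi 0 = 1 := rfl
lemma phi1 : Phi 1 = 2 := rfl
lemma phi2 (n : ℕ) : Phi (n+2) = Phi (n+1) + Phi n := by simp [Phi, fibWord]
lemma phi_ge : ∀ n, n + 1 ≤ Phi n := by
  intro n
  induction n using Nat.twoStepInduction with
  | zero => simp [phi0]
  | one => simp [phi1]
  | more n ih1 ih2 => rw [phi2]; omega
lemma phi_pos (n : ℕ) : 0 < Phi n := by have := phi_ge n; omega

noncomputable def sig : ℝ := (Real.sqrt 5 - 1)/2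

lemma s5_sq : Real.sqrt 5 ^ 2 = 5 := Real.sq_sqrt (by norm_num)
lemma s5_gt : 2.2360 < Real.sqrt 5 := by
  nlinarith [s5_sq, Real.sqrt_nonneg 5]
lemma s5_lt : Real.sqrt 5 < 2.2361 := by
  nlinarith [s5_sq, Real.sqrt_nonneg 5]

lemma sig_gt : 0.6180 < sig := by rw [sig]; linarith [s5_gt]
lemma sig_lt : sig < 0.61805 := by rw [sig]; linarith [s5_lt]
lemma sig_pos : 0 < sig := by linarith [sig_gt]
lemma sig_lt_one : sig < 1 := by linarith [sig_lt]
lemma sig_sq : sig^2 = 1 - sig := by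
  rw [sig]; field_simp; nlinarith [s5_sq]

lemma sig_cube : sig^3 = 2*sig - 1 := by linear_combination (sig - 1) * sig_sq
lemma sig_four : sig^4 = 2 - 3*sig := by linear_combination (sig^2 - sig + 2) * sig_sq

noncomputable def alf : ℝ := sig^2

lemma alf_pos : 0 < alf := pow_pos sig_pos 2
lemma alf_lt_one : alf < 1 := by rw [alf, sig_sq]; linarith [sig_pos]

lemma sig_irr : Irrational sig := by
  have h5 : Irrational (Real.sqrt 5) := (Nat.prime_five).irrational_sqrt
  rw [sig]
  have h1 : Irrational (Real.sqrt 5 - 1) := by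
    have := h5.sub_intCast 1
    simpa using this
  have h2 : Irrational ((Real.sqrt 5 - 1) / ((2:ℕ):ℝ)) := h1.div_natCast (by norm_num)
  simpa using h2

lemma alf_irr : Irrational alf := by
  rw [alf, sig_sq]
  have := sig_irr.intCast_sub 1
  simpa using this

def Az : ℕ → ℤ
  | 0 => 0
  | 1 => 1
  | n+2 => Az (n+1) + Az n

lemma sig_pow_pos (n : ℕ) : 0 < sig^n := pow_pos sig_pos n
lemma sig_pow_lt {m n : ℕ} (h : m < n) : sig^n < sig^m :=
  pow_lt_pow_right_of_lt_one₀ sig_pos sig_lt_one h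
lemma sig_pow_le {m n : ℕ} (h : m ≤ n) : sig^n ≤ sig^m :=
  pow_le_pow_of_le_one (le_of_lt sig_pos) (le_of_lt sig_lt_one) h
lemma sig_pow_le_sq (n : ℕ) (h : 2 ≤ n) : sig^n ≤ sig^2 := sig_pow_le h
lemma sig_sq_lt_half : sig^2 < 1/2 := by nlinarith [sig_sq, sig_gt]

lemma abs_add_lower (a b : ℝ) : |a| - |b| ≤ |a + b| := by
  have h := abs_add_le (a + b) (-b)
  simp only [add_neg_cancel_right, abs_neg] at h
  linarith

lemma abs_neg_one_pow_mul (n : ℕ) (x : ℝ) (hx : 0 < x) : |(-1:ℝ)^n * x| = x := by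
  rw [abs_mul, abs_pow, abs_neg, abs_one, one_pow, one_mul, abs_of_pos hx]

lemma etaId : ∀ n : ℕ, (Phi n : ℝ) * alf = (Az n : ℝ) + (-1)^n * sig^(n+2) := by
  intro n
  induction n using Nat.twoStepInduction with
  | zero => simp [phi0, Az, alf]
  | one =>
    simp only [phi1, Az]
    push_cast
    rw [alf]
    linear_combination (1 + sig) * sig_sq
  | more n ih1 ih2 =>
    rw [phi2, show Az (n+2) = Az (n+1) + Az n from rfl]
    push_cast
    have key : (-1:ℝ)^(n+1) * sig^(n+3) + (-1)^n * sig^(n+2) = (-1)^(n+2) * sig^(n+4) := by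
      have h4 : sig^(n+4) = sig^(n+2) - sig^(n+3) := by
        have h : sig^(n+2) * sig^2 = sig^(n+2) * (1 - sig) := by rw [sig_sq]
        calc sig^(n+4) = sig^(n+2) * sig^2 := by ring
        _ = sig^(n+2) * (1 - sig) := h
        _ = sig^(n+2) - sig^(n+3) := by ring
      rw [h4]; ring
    calc ((Phi (n+1) : ℝ) + (Phi n : ℝ)) * alf
        = (Phi (n+1) : ℝ) * alf + (Phi n : ℝ) * alf := by ring
      _ = ((Az (n+1) : ℝ) + (Az n : ℝ)) + ((-1)^(n+1) * sig^(n+3) + (-1)^n * sig^(n+2)) := by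
          rw [ih1, ih2]; ring
      _ = (Az (n+1) : ℝ) + (Az n : ℝ) + (-1)^(n+2) * sig^(n+4) := by rw [key]

-- best approximation: for 1 ≤ e < Φ_{m+1}, ‖e α‖ ≥ σ^{m+2}
lemma absBA : ∀ m : ℕ, ∀ e : ℕ, 1 ≤ e → e < Phi (m+1) → ∀ P : ℤ, sig^(m+2) ≤ |(e:ℝ) * alf - P| := by
  intro m
  induction m using Nat.strong_induction_on with
  | _ m IH =>
    intro e he1 he2 P
    match m with
    | 0 =>
      have hP1 : Phi (0+1) = 2 := phi1
      have : e = 1 := by omega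
      subst this
      push_cast
      rw [alf]
      rcases le_or_gt (P:ℝ) 0 with hP | hP
      · rw [abs_of_nonneg (by nlinarith [sig_pow_pos 2])]
        nlinarith [sig_pow_pos 2]
      · have h1P : (1:ℝ) ≤ (P:ℝ) := by exact_mod_cast hP
        rw [abs_of_nonpos (by nlinarith [sig_sq, sig_gt, sig_lt])]
        nlinarith [sig_sq, sig_gt, sig_lt]
    | (m'+1) =>
      rcases lt_trichotomy e (Phi (m'+1)) with hc | hc | hc
      · have h := IH m' (by omega) e he1 hc P
        calc sig^(m'+1+2) ≤ sig^(m'+2) := sig_pow_le (by omega)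
        _ ≤ _ := h
      · -- e = Phi (m'+1)
        rw [hc, etaId (m'+1)]
        rcases eq_or_ne P (Az (m'+1)) with rfl | hne
        · rw [show (Az (m'+1):ℝ) + (-1)^(m'+1) * sig^(m'+1+2) - (Az (m'+1)) = (-1)^(m'+1) * sig^(m'+1+2) by ring]
          rw [abs_neg_one_pow_mul _ _ (sig_pow_pos _)]
        · have hPA : (1:ℝ) ≤ |(Az (m'+1) : ℝ) - P| := by
            have : (1:ℤ) ≤ |Az (m'+1) - P| := Int.one_le_abs (by omega)
            calc (1:ℝ) ≤ ((|Az (m'+1) - P| : ℤ) : ℝ) := by exact_mod_cast this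
            _ = |(Az (m'+1) : ℝ) - P| := by push_cast [Int.cast_abs]; ring_nf
          have hlow : |(Az (m'+1) : ℝ) - P| - |(-1:ℝ)^(m'+1) * sig^(m'+1+2)|
              ≤ |((Az (m'+1) : ℝ) - P) + (-1)^(m'+1) * sig^(m'+1+2)| := abs_add_lower _ _
          rw [abs_neg_one_pow_mul _ _ (sig_pow_pos _)] at hlow
          have hsmall : sig^(m'+1+2) ≤ sig^2 := sig_pow_le_sq _ (by omega)
          have : sig^(m'+1+2) ≤ |((Az (m'+1) : ℝ) - P) + (-1)^(m'+1) * sig^(m'+1+2)| := by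
            nlinarith [sig_sq_lt_half]
          calc sig^(m'+1+2) ≤ _ := this
          _ = |(Az (m'+1):ℝ) + (-1)^(m'+1) * sig^(m'+1+2) - P| := by ring_nf
      · -- Phi (m'+1) < e
        match m' with
        | 0 =>
          exfalso
          have h1 : Phi (0+1) = 2 := phi1
          have h2 : Phi (0+1+1) = Phi (0+1) + Phi 0 := phi2 0
          have h0 : Phi 0 = 1 := phi0
          omega
        | m''+1 =>
          have hphi : Phi (m''+1+1+1) = Phi (m''+1+1) + Phi (m''+1) := phi2 (m''+1)
          set e' := e - Phi (m''+1+1) with he'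
          have hee : e = Phi (m''+1+1) + e' := by omega
          have he'1 : 1 ≤ e' := by omega
          have he'2 : e' < Phi (m''+1) := by omega
          have hIH := IH m'' (by omega) e' he'1 he'2 (P - Az (m''+1+1))
          have hsplit : (e:ℝ) * alf - P
              = ((e':ℝ) * alf - ((P - Az (m''+1+1) : ℤ) : ℝ)) + (-1)^(m''+1+1) * sig^(m''+1+1+2) := by
            rw [hee]
            push_cast
            rw [show ((Phi (m''+1+1):ℝ) + (e':ℝ)) * alf = (Phi (m''+1+1):ℝ) * alf + (e':ℝ)*alf by ring,
              etaId (m''+1+1)]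
            push_cast
            ring
          rw [hsplit]
          have hlow := abs_add_lower ((e':ℝ) * alf - ((P - Az (m''+1+1) : ℤ) : ℝ))
            ((-1:ℝ)^(m''+1+1) * sig^(m''+1+1+2))
          rw [abs_neg_one_pow_mul _ _ (sig_pow_pos _)] at hlow
          -- sig^{m''+2} - sig^{m''+4} = sig^{m''+3} ≥ sig^{m''+4}... goal sig^{m''+1+1+2}
          have hkey : sig^(m''+1+1+2) ≤ sig^(m''+2) - sig^(m''+1+1+2) := by
            have h1 : sig^(m''+2) - sig^(m''+1+1+2) = sig^(m''+2) * (1 - sig^2) := by ring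
            have h2 : (1:ℝ) - sig^2 = sig := by rw [sig_sq]; ring
            rw [h1, h2, show sig^(m''+1+1+2) = sig^(m''+2) * sig^2 by ring]
            have hss : sig^2 ≤ sig := by nlinarith [sig_pos, sig_lt_one]
            exact mul_le_mul_of_nonneg_left hss (le_of_lt (sig_pow_pos _))
          linarith [hIH, hlow, hkey]

-- (N): for Φ_j < d < Φ_{j+1} (j ≥ 2), dist(dα, ℤ) > σ^j ; here j = j'+2
lemma Nlem : ∀ j' d : ℕ, Phi (j'+2) < d → d < Phi (j'+3) → ∀ P : ℤ,
    sig^(j'+2) < |(d:ℝ) * alf - P| := by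
  intro j' d hd1 hd2 P
  have hphi3 : Phi (j'+3) = Phi (j'+2) + Phi (j'+1) := phi2 (j'+1)
  obtain ⟨e, he1, he2, hde⟩ : ∃ e, 1 ≤ e ∧ e < Phi (j'+1) ∧ d = Phi (j'+2) + e :=
    ⟨d - Phi (j'+2), by omega, by omega, by omega⟩
  rcases lt_trichotomy e (Phi j') with hc | hc | hc
  · -- e < Phi j' : needs j' ≥ 1
    cases j' with
    | zero => rw [phi0] at hc; omega
    | succ j2 =>
      have hBA := absBA j2 e he1 hc (P - Az (j2+3))
      have hsplit : (d:ℝ) * alf - P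
          = ((e:ℝ) * alf - ((P - Az (j2+3) : ℤ) : ℝ)) + (-1)^(j2+3) * sig^(j2+5) := by
        rw [hde]
        push_cast
        rw [show ((Phi (j2+1+2):ℝ) + (e:ℝ)) * alf = (Phi (j2+3):ℝ) * alf + (e:ℝ)*alf by
          norm_num; ring, etaId (j2+3)]
        push_cast
        ring_nf
      rw [hsplit]
      have hlow := abs_add_lower ((e:ℝ) * alf - ((P - Az (j2+3) : ℤ) : ℝ))
        ((-1:ℝ)^(j2+3) * sig^(j2+5))
      rw [abs_neg_one_pow_mul _ _ (sig_pow_pos _)] at hlow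
      have hkey : sig^(j2+1+2) < sig^(j2+2) - sig^(j2+5) := by
        have hnum : (0:ℝ) < 1 - sig^3 - sig := by
          rw [sig_cube]; linarith [sig_lt]
        have hfac : sig^(j2+2) - sig^(j2+5) - sig^(j2+1+2) = sig^(j2+2) * (1 - sig^3 - sig) := by
          ring
        nlinarith [sig_pow_pos (j2+2)]
      linarith [hBA, hlow, hkey]
  · -- e = Phi j'
    have hsplit : (d:ℝ) * alf - P
        = ((Az (j'+2) + Az j' - P : ℤ) : ℝ) + (-1)^j' * (sig^(j'+4) + sig^(j'+2)) := by
      rw [hde, hc]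
      push_cast
      rw [show ((Phi (j'+2):ℝ) + (Phi j' : ℝ)) * alf = (Phi (j'+2):ℝ) * alf + (Phi j':ℝ)*alf by
        ring, etaId (j'+2), etaId j']
      push_cast
      ring
    rw [hsplit]
    have hW : (0:ℝ) < sig^(j'+4) + sig^(j'+2) := add_pos (sig_pow_pos _) (sig_pow_pos _)
    rcases eq_or_ne P (Az (j'+2) + Az j') with rfl | hne
    · rw [show ((Az (j'+2) + Az j' - (Az (j'+2) + Az j') : ℤ) : ℝ) = 0 by push_cast; ring]
      rw [zero_add, abs_neg_one_pow_mul _ _ hW]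
      linarith [sig_pow_pos (j'+4)]
    · have hPA : (1:ℝ) ≤ |((Az (j'+2) + Az j' - P : ℤ) : ℝ)| := by
        have : (1:ℤ) ≤ |Az (j'+2) + Az j' - P| := Int.one_le_abs (by omega)
        exact_mod_cast this
      have hlow := abs_add_lower ((Az (j'+2) + Az j' - P : ℤ) : ℝ)
        ((-1:ℝ)^j' * (sig^(j'+4) + sig^(j'+2)))
      rw [abs_neg_one_pow_mul _ _ hW] at hlow
      have hsm1 : sig^(j'+4) ≤ sig^4 := sig_pow_le (by omega)
      have hsm2 : sig^(j'+2) ≤ sig^2 := sig_pow_le (by omega)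
      have hnum : sig^4 + 2*sig^2 < 1 := by
        rw [sig_four, sig_sq]; linarith [sig_gt]
      linarith
  · -- Phi j' < e < Phi (j'+1): j' ≥ 2
    cases j' with
    | zero =>
      exfalso; rw [phi0] at hc; rw [phi1] at he2; omega
    | succ jm =>
    cases jm with
    | zero =>
      exfalso
      rw [phi1] at hc
      rw [show Phi (0+1+1) = 3 by rw [phi2, phi1, phi0]] at he2
      omega
    | succ j2 =>
      simp only [show j2+1+1 = j2+2 from rfl, show j2+1+1+1 = j2+3 from rfl,
        show j2+1+1+2 = j2+4 from rfl, show j2+1+1+3 = j2+5 from rfl] at hphi3 hde he2 hc hd1 hd2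
      have hphi2b : Phi (j2+3) = Phi (j2+2) + Phi (j2+1) := phi2 (j2+1)
      obtain ⟨e', he'1, he'2, hee⟩ : ∃ e', 1 ≤ e' ∧ e' < Phi (j2+1) ∧ e = Phi (j2+2) + e' := by
        exact ⟨e - Phi (j2+2), by omega, by omega, by omega⟩
      have hBA := absBA j2 e' he'1 he'2 (P - Az (j2+4) - Az (j2+2))
      have hsplit : (d:ℝ) * alf - P
          = ((e':ℝ) * alf - ((P - Az (j2+4) - Az (j2+2) : ℤ) : ℝ))
            + (-1)^j2 * (sig^(j2+6) + sig^(j2+4)) := by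
        rw [hde, hee]
        push_cast
        rw [show ((Phi (j2+4):ℝ) + ((Phi (j2+2):ℝ) + (e':ℝ))) * alf
            = (Phi (j2+4):ℝ) * alf + (Phi (j2+2):ℝ)*alf + (e':ℝ)*alf by norm_num; ring,
          etaId (j2+4), etaId (j2+2)]
        push_cast
        have hs1 : ((-1:ℝ))^(j2+4) = (-1)^j2 := by
          rw [pow_add]; norm_num
        have hs2 : ((-1:ℝ))^(j2+2) = (-1)^j2 := by
          rw [pow_add]; norm_num
        rw [hs1, hs2]
        ring
      rw [hsplit]
      have hW : (0:ℝ) < sig^(j2+6) + sig^(j2+4) := add_pos (sig_pow_pos _) (sig_pow_pos _)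
      have hlow := abs_add_lower ((e':ℝ) * alf - ((P - Az (j2+4) - Az (j2+2) : ℤ) : ℝ))
        ((-1:ℝ)^j2 * (sig^(j2+6) + sig^(j2+4)))
      rw [abs_neg_one_pow_mul _ _ hW] at hlow
      have hkey : sig^(j2+1+1+2) < sig^(j2+2) - (sig^(j2+6) + sig^(j2+4)) := by
        have hnum : (0:ℝ) < 1 - sig^4 - 2*sig^2 := by
          rw [sig_four, sig_sq]; linarith [sig_gt]
        have hfac : sig^(j2+2) - (sig^(j2+6) + sig^(j2+4)) - sig^(j2+1+1+2)
            = sig^(j2+2) * (1 - sig^4 - 2*sig^2) := by ring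
        nlinarith [sig_pow_pos (j2+2)]
      linarith [hBA, hlow, hkey]

-- fract helpers
lemma fract_nowrap (x c : ℝ) (h0 : 0 ≤ Int.fract x + c) (h1 : Int.fract x + c < 1) :
    Int.fract (x + c) = Int.fract x + c := by
  have hx : x + c = ((⌊x⌋ : ℤ) : ℝ) + (Int.fract x + c) := by rw [Int.fract]; push_cast; ring
  rw [hx, Int.fract_intCast_add, Int.fract_eq_self.mpr ⟨h0, h1⟩]

lemma fract_addPhi (y : ℝ) (t m : ℕ) :
    Int.fract (y + ((t + Phi m : ℕ) : ℝ) * alf)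
      = Int.fract ((y + (t:ℝ) * alf) + (-1)^m * sig^(m+2)) := by
  push_cast
  rw [show y + ((t:ℝ) + (Phi m : ℝ)) * alf = (y + (t:ℝ)*alf + (Phi m : ℝ)*alf) by ring, etaId m]
  rw [show y + (t:ℝ)*alf + ((Az m : ℝ) + (-1)^m * sig^(m+2))
      = (y + (t:ℝ)*alf + (-1)^m*sig^(m+2)) + (Az m : ℝ) by ring]
  rw [Int.fract_add_intCast]

lemma sig_split (n : ℕ) : sig^n = sig^(n+1) + sig^(n+2) := by
  have : sig^n * 1 = sig^n * (sig + sig^2) := by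
    rw [sig_sq]; ring
  calc sig^n = sig^n * (sig + sig^2) := by rw [← this]; ring
  _ = sig^(n+1) + sig^(n+2) := by ring

-- hitting lemma
lemma hit : ∀ j : ℕ, 1 ≤ j → ∀ y : ℝ, ∃ t : ℕ, t ≤ Phi j ∧ Int.fract (y + (t:ℝ) * alf) ≤ sig^j := by
  intro j
  induction j using Nat.strong_induction_on with
  | _ j IH =>
    intro hj y
    have hfy0 : 0 ≤ Int.fract y := Int.fract_nonneg y
    have hfy1 : Int.fract y < 1 := Int.fract_lt_one y
    match j, hj with
    | 1, _ =>
      rcases le_or_gt (Int.fract y) sig with hc | hc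
      · exact ⟨0, by simp [phi1], by simpa using hc⟩
      · refine ⟨1, by simp [phi1], ?_⟩
        have hw : Int.fract (y + alf) = Int.fract y + alf - 1 := by
          have hx : y + alf = ((⌊y⌋ + 1 : ℤ) : ℝ) + (Int.fract y + alf - 1) := by
            rw [Int.fract]; push_cast; ring
          rw [hx, Int.fract_intCast_add, Int.fract_eq_self.mpr ⟨?_, ?_⟩]
          · rw [alf]; nlinarith [sig_sq]
          · rw [alf]; nlinarith [sig_sq, sig_pos, sig_lt_one]
        simpa only [Nat.cast_one, one_mul] using le_trans (le_of_eq hw)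
          (by rw [alf]; nlinarith [sig_sq, sig_pos])
    | 2, _ =>
      have hphi2 : Phi 2 = 3 := by rw [phi2, phi1, phi0]
      have hs2 : sig^2 = alf := rfl
      rcases le_or_gt (Int.fract y) (sig^2) with hc | hc
      · exact ⟨0, by omega, by simpa using hc⟩
      rcases le_or_gt (Int.fract y) sig with hc2 | hc2
      · -- middle: t = 2 = 0 + Phi 1, shift by -sig^3
        refine ⟨2, by omega, ?_⟩
        have key : Int.fract (y + ((0 + Phi 1 : ℕ):ℝ) * alf) ≤ sig^2 := by
          rw [fract_addPhi y 0 1]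
          simp only [Nat.cast_zero, zero_mul, add_zero, pow_one, neg_one_mul]
          rw [show y + -(sig^(1+2)) = y + (-(sig^3)) from by norm_num]
          rw [fract_nowrap y (-(sig^3)) (by nlinarith [sig_pow_lt (show 2 < 3 by omega)])
            (by nlinarith [sig_pow_pos 3])]
          have hsss : sig - sig^3 = sig^2 := by rw [sig_cube, sig_sq]; ring
          linarith
        have h2 : (0 + Phi 1 : ℕ) = 2 := by rw [phi1]
        rw [h2] at key
        exact key
      · refine ⟨1, by omega, ?_⟩
        have hw : Int.fract (y + alf) = Int.fract y + alf - 1 := by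
          have hx : y + alf = ((⌊y⌋ + 1 : ℤ) : ℝ) + (Int.fract y + alf - 1) := by
            rw [Int.fract]; push_cast; ring
          rw [hx, Int.fract_intCast_add, Int.fract_eq_self.mpr ⟨?_, ?_⟩]
          · rw [alf]; nlinarith [sig_sq]
          · rw [alf]; nlinarith [sig_sq, sig_pos, sig_lt_one]
        simp only [Nat.cast_one, one_mul]
        rw [hw, hs2]
        linarith [hfy1]
    | (j'+3), _ =>
      have hmono23 : Phi (j'+2) ≤ Phi (j'+3) := by rw [phi2 (j'+1)]; linarith [phi_pos (j'+1)]
      have hmono13 : Phi (j'+1) ≤ Phi (j'+3) := by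
        rw [phi2 (j'+1)]; linarith [phi_pos (j'+2), phi_pos (j'+1),
          le_of_eq (phi2 j').symm]
      rcases Nat.even_or_odd j' with hpar | hpar
      · -- j' even : use IH (j'+2), one shift by -sig^{j'+3} (cost Phi (j'+1))
        obtain ⟨t', ht', hz⟩ := IH (j'+2) (by omega) (by omega) y
        set z := Int.fract (y + (t':ℝ) * alf) with hzdef
        rcases le_or_gt z (sig^(j'+3)) with hc | hc
        · exact ⟨t', le_trans ht' hmono23, hc⟩
        · refine ⟨t' + Phi (j'+1), by
            have h3 : Phi (j'+3) = Phi (j'+2) + Phi (j'+1) := phi2 (j'+1)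
            omega, ?_⟩
          rw [fract_addPhi y t' (j'+1)]
          have hsign : ((-1:ℝ))^(j'+1) = -1 := Odd.neg_one_pow (by simpa using hpar.add_one)
          rw [hsign, neg_one_mul]
          rw [show (y + (t':ℝ)*alf) + -(sig^(j'+1+2)) = (y + (t':ℝ)*alf) + (-(sig^(j'+3))) from by norm_num]
          rw [fract_nowrap _ _ (by rw [← hzdef]; linarith [sig_pow_pos (j'+3)])
            (by rw [← hzdef]; linarith [Int.fract_lt_one (y + (t':ℝ)*alf), sig_pow_pos (j'+3)])]
          rw [← hzdef]
          have : sig^(j'+2) - sig^(j'+3) = sig^(j'+4) := by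
            have := sig_split (j'+2); linarith
          linarith [sig_pow_lt (show j'+3 < j'+4 by omega)]
      · -- j' odd : use IH (j'+1)
        have hj1 : 1 ≤ j' := hpar.pos
        obtain ⟨t', ht', hz⟩ := IH (j'+1) (by omega) (by omega) y
        set z := Int.fract (y + (t':ℝ) * alf) with hzdef
        have hz0 : 0 ≤ z := Int.fract_nonneg _
        have hz1 : z < 1 := Int.fract_lt_one _
        rcases le_or_gt z (sig^(j'+3)) with hc | hc
        · exact ⟨t', le_trans ht' hmono13, hc⟩
        rcases le_or_gt z (sig^(j'+3) + sig^(j'+4)) with hc2 | hc2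
        · refine ⟨t' + Phi (j'+2), by
            have h3 : Phi (j'+3) = Phi (j'+2) + Phi (j'+1) := phi2 (j'+1)
            omega, ?_⟩
          rw [fract_addPhi y t' (j'+2)]
          have hsign : ((-1:ℝ))^(j'+2) = -1 := Odd.neg_one_pow (by
            rcases hpar with ⟨c, hc⟩; exact ⟨c+1, by omega⟩)
          rw [hsign, neg_one_mul]
          rw [show (y + (t':ℝ)*alf) + -(sig^(j'+2+2)) = (y + (t':ℝ)*alf) + (-(sig^(j'+4))) from by norm_num]
          rw [fract_nowrap _ _ (by rw [← hzdef]; nlinarith [sig_pow_lt (show j'+3 < j'+4 by omega), sig_pow_pos (j'+4)])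
            (by rw [← hzdef]; linarith [sig_pow_pos (j'+4)])]
          rw [← hzdef]
          linarith
        · refine ⟨t' + Phi j', by
            have : Phi (j'+1) + Phi j' = Phi (j'+2) := (phi2 j').symm
            omega, ?_⟩
          rw [fract_addPhi y t' j']
          have hsign : ((-1:ℝ))^j' = -1 := Odd.neg_one_pow hpar
          rw [hsign, neg_one_mul]
          have hzc : sig^(j'+2) < z := by
            have := sig_split (j'+2); linarith
          rw [fract_nowrap _ _ (by rw [← hzdef]; linarith [sig_pow_pos (j'+2)])
            (by rw [← hzdef]; linarith [sig_pow_pos (j'+2)])]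
          rw [← hzdef]
          have hup : z ≤ sig^(j'+1) := hz
          have : sig^(j'+1) - sig^(j'+2) = sig^(j'+3) := by
            have := sig_split (j'+1); linarith
          linarith

-- ===== mechanical characterization =====
noncomputable def Dl (i : ℕ) : ℤ := ⌊((i:ℝ) + 1) * alf⌋ - ⌊(i:ℝ) * alf⌋
noncomputable def ltr (i : ℕ) : Bool := decide (Dl (i+1) = 1)

lemma Dl_bounds (i : ℕ) : 0 ≤ Dl i ∧ Dl i ≤ 1 := by
  constructor
  · have : ⌊(i:ℝ) * alf⌋ ≤ ⌊((i:ℝ)+1) * alf⌋ := by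
      apply Int.floor_le_floor
      nlinarith [alf_pos]
    simp [Dl]; omega
  · have : ⌊((i:ℝ)+1) * alf⌋ ≤ ⌊(i:ℝ)*alf + 1⌋ := by
      apply Int.floor_le_floor
      nlinarith [alf_lt_one, alf_pos]
    rw [show ((i:ℝ)*alf + 1) = (i:ℝ)*alf + (1:ℤ) by push_cast; ring, Int.floor_add_intCast] at this
    simp [Dl]; omega

lemma fract_talf_lb (N t : ℕ) (h1 : 1 ≤ t) (h2 : t < Phi (N+1)) :
    sig^(N+2) ≤ Int.fract ((t:ℝ)*alf) := by
  have h := absBA N t h1 h2 ⌊(t:ℝ)*alf⌋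
  rwa [show (t:ℝ)*alf - ⌊(t:ℝ)*alf⌋ = Int.fract ((t:ℝ)*alf) from rfl,
    abs_of_nonneg (Int.fract_nonneg _)] at h

lemma fract_talf_ub (N t : ℕ) (h1 : 1 ≤ t) (h2 : t < Phi (N+1)) :
    Int.fract ((t:ℝ)*alf) ≤ 1 - sig^(N+2) := by
  have h := absBA N t h1 h2 (⌊(t:ℝ)*alf⌋ + 1)
  have hf : (t:ℝ)*alf - (⌊(t:ℝ)*alf⌋ + 1) = Int.fract ((t:ℝ)*alf) - 1 := by
    rw [Int.fract]; push_cast; ring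
  rw [show ((⌊(t:ℝ)*alf⌋ + 1 : ℤ):ℝ) = (⌊(t:ℝ)*alf⌋ : ℝ) + 1 by push_cast; ring] at h
  rw [hf, abs_of_nonpos (by linarith [Int.fract_lt_one ((t:ℝ)*alf)])] at h
  linarith

lemma floor_shift (N t : ℕ) (h1 : 1 ≤ t) (h2 : t < Phi (N+1)) :
    ⌊((Phi (N+1) + t : ℕ):ℝ) * alf⌋ = Az (N+1) + ⌊(t:ℝ) * alf⌋ := by
  have hsum : ((Phi (N+1) + t : ℕ):ℝ) * alf
      = ((t:ℝ)*alf + (-1)^(N+1) * sig^(N+3)) + (Az (N+1) : ℝ) := by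
    push_cast
    rw [show ((Phi (N+1):ℝ) + (t:ℝ)) * alf = (Phi (N+1):ℝ) * alf + (t:ℝ)*alf by ring, etaId (N+1)]
    ring
  rw [hsum, Int.floor_add_intCast]
  have habs := abs_neg_one_pow_mul (N+1) (sig^(N+3)) (sig_pow_pos _)
  have hb := abs_le.mp habs.le
  have hlb := fract_talf_lb N t h1 h2
  have hub := fract_talf_ub N t h1 h2
  have hss : sig^(N+3) < sig^(N+2) := sig_pow_lt (by omega)
  have hfr : Int.fract ((t:ℝ)*alf) = (t:ℝ)*alf - ⌊(t:ℝ)*alf⌋ := rfl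
  have : ⌊(t:ℝ)*alf + (-1)^(N+1) * sig^(N+3)⌋ = ⌊(t:ℝ)*alf⌋ := by
    apply Int.floor_eq_iff.mpr
    constructor
    · linarith [Int.floor_le ((t:ℝ)*alf)]
    · push_cast
      linarith [Int.lt_floor_add_one ((t:ℝ)*alf)]
  omega

lemma Dl_shift (N t : ℕ) (h1 : 1 ≤ t) (h2 : t + 1 < Phi (N+1)) :
    Dl (Phi (N+1) + t) = Dl t := by
  have hA := floor_shift N t h1 (by omega)
  have hB := floor_shift N (t+1) (by omega) h2
  have e1 : ((Phi (N+1) + t : ℕ):ℝ) + 1 = ((Phi (N+1) + (t+1) : ℕ):ℝ) := by push_cast; ring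
  have e2 : ((t:ℕ):ℝ) + 1 = ((t+1:ℕ):ℝ) := by push_cast; ring
  unfold Dl
  rw [e1, e2, hA, hB]
  omega

-- small floor values
lemma fl1 : ⌊(1:ℝ)*alf⌋ = 0 := by
  apply Int.floor_eq_iff.mpr
  constructor <;> [skip; skip] <;> rw [alf, sig_sq] <;> push_cast <;> [linarith [sig_lt]; linarith [sig_gt]]
lemma fl2 : ⌊(2:ℝ)*alf⌋ = 0 := by
  apply Int.floor_eq_iff.mpr
  rw [alf, sig_sq]; constructor <;> push_cast <;> [linarith [sig_lt]; linarith [sig_gt]]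
lemma fl3 : ⌊(3:ℝ)*alf⌋ = 1 := by
  apply Int.floor_eq_iff.mpr
  rw [alf, sig_sq]; constructor <;> push_cast <;> [linarith [sig_lt]; linarith [sig_gt]]
lemma fl4 : ⌊(4:ℝ)*alf⌋ = 1 := by
  apply Int.floor_eq_iff.mpr
  rw [alf, sig_sq]; constructor <;> push_cast <;> [linarith [sig_lt]; linarith [sig_gt]]
lemma fl5 : ⌊(5:ℝ)*alf⌋ = 1 := by
  apply Int.floor_eq_iff.mpr
  rw [alf, sig_sq]; constructor <;> push_cast <;> [linarith [sig_lt]; linarith [sig_gt]]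
lemma fl6 : ⌊(6:ℝ)*alf⌋ = 2 := by
  apply Int.floor_eq_iff.mpr
  rw [alf, sig_sq]; constructor <;> push_cast <;> [linarith [sig_lt]; linarith [sig_gt]]

lemma flA : ⌊alf⌋ = 0 := by rw [show alf = 1*alf by ring]; exact fl1

lemma ltr0 : ltr 0 = false := by
  have h : Dl 1 = 0 := by
    unfold Dl; norm_num; rw [fl2, flA]; norm_num
  simp [ltr, h]
lemma ltr1 : ltr 1 = true := by
  have h : Dl 2 = 1 := by
    unfold Dl; norm_num; rw [fl2, fl3]; norm_num
  simp [ltr, h]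
lemma ltr2 : ltr 2 = false := by
  have h : Dl 3 = 0 := by
    unfold Dl; norm_num; rw [fl3, fl4]; norm_num
  simp [ltr, h]
lemma ltr3 : ltr 3 = false := by
  have h : Dl 4 = 0 := by
    unfold Dl; norm_num; rw [fl4, fl5]; norm_num
  simp [ltr, h]
lemma ltr4 : ltr 4 = true := by
  have h : Dl 5 = 1 := by
    unfold Dl; norm_num; rw [fl5, fl6]; norm_num
  simp [ltr, h]

lemma mech : ∀ n, fibWord n = (List.range (Phi n)).map ltr := by
  intro n
  induction n using Nat.strong_induction_on with
  | _ n IH =>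
    match n with
    | 0 => simp [fibWord, phi0, List.range_succ, ltr0]
    | 1 =>
      rw [show Phi 1 = 2 from phi1]
      simp [fibWord, List.range_succ, ltr0, ltr1]
    | 2 =>
      rw [show Phi 2 = 3 by rw [phi2, phi1, phi0]]
      simp [fibWord, List.range_succ, ltr0, ltr1, ltr2]
    | 3 =>
      rw [show Phi 3 = 5 by rw [show (3:ℕ) = 1+2 from rfl, phi2, phi2, phi1, phi0]]
      simp [fibWord, List.range_succ, ltr0, ltr1, ltr2, ltr3, ltr4]
    | (n+4) =>
      have h1 : fibWord (n+4) = fibWord (n+3) ++ fibWord (n+2) := rfl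
      rw [h1, IH (n+3) (by omega), IH (n+2) (by omega)]
      have h2 : Phi (n+4) = Phi (n+3) + Phi (n+2) := phi2 (n+2)
      rw [h2, List.range_add, List.map_append, List.map_map]
      congr 1
      apply List.map_congr_left
      intro i hi
      rw [List.mem_range] at hi
      show ltr i = ltr (Phi (n+3) + i)
      have hD : Dl (Phi (n+3) + i + 1) = Dl (i+1) := by
        have he : Phi (n+3) + i + 1 = Phi (n+3) + (i+1) := by omega
        rw [he]
        apply Dl_shift (n+2) (i+1) (by omega)
        show i+1+1 < Phi (n+3)
        have hge : n + 2 ≤ Phi (n+1) := phi_ge (n+1)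
        have h3 : Phi (n+3) = Phi (n+2) + Phi (n+1) := phi2 (n+1)
        omega
      unfold ltr
      rw [hD]

lemma fibInf_ltr (i : ℕ) : fibInf i = ltr i := by
  unfold fibInf
  rw [mech (i+2)]
  have hi : i < Phi (i+2) := by have := phi_ge (i+2); omega
  rw [List.getD_eq_getElem?_getD, List.getElem?_map, List.getElem?_range hi]
  simp

-- ===== windows of the infinite word =====
def win (p ℓ : ℕ) : List Bool := (List.range ℓ).map (fun t => fibInf (p + t))

lemma win_length (p ℓ : ℕ) : (win p ℓ).length = ℓ := by simp [win]

lemma win_append (p a b : ℕ) : win p (a+b) = win p a ++ win (p+a) b := by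
  simp only [win, List.range_add, List.map_append, List.map_map]
  congr 1
  apply List.map_congr_left
  intro x _
  simp [Nat.add_assoc]

lemma fibPrefix_win (n : ℕ) : fibPrefix n = win 0 n := by
  simp [fibPrefix, win]

lemma win_eq_imp {p q L : ℕ} (h : win p L = win q L) : ∀ t < L, fibInf (p+t) = fibInf (q+t) := by
  intro t ht
  have h1 : (win p L).getD t false = (win q L).getD t false := by rw [h]
  simpa [win, List.getD_eq_getElem?_getD, List.getElem?_map, List.getElem?_range ht] using h1

lemma Dl_eq_of_fibInf {a b : ℕ} (h : fibInf a = fibInf b) : Dl (a+1) = Dl (b+1) := by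
  rw [fibInf_ltr, fibInf_ltr] at h
  unfold ltr at h
  have ha := Dl_bounds (a+1)
  have hb := Dl_bounds (b+1)
  rcases eq_or_ne (Dl (a+1)) 1 with h1 | h1 <;> rcases eq_or_ne (Dl (b+1)) 1 with h2 | h2 <;>
    simp [h1, h2] at h ⊢ <;> omega

lemma fract_ne_zero (i : ℕ) (hi : 1 ≤ i) : Int.fract ((i:ℝ) * alf) ≠ 0 := by
  intro h
  have h2 : ((i:ℝ)*alf) = ((⌊(i:ℝ)*alf⌋ : ℤ) : ℝ) := by
    have := Int.fract ((i:ℝ)*alf)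
    rw [Int.fract] at h
    linarith [h]
  have hirr : Irrational ((i:ℕ) * alf) := alf_irr.natCast_mul (by omega)
  exact hirr.ne_int _ (by exact_mod_cast h2)

lemma wrapback (x b : ℝ) (hb0 : 0 < b) (hb1 : b < 1) (hx : Int.fract x ≠ 0)
    (h : Int.fract (x + b) ≤ b) : 1 - b ≤ Int.fract x := by
  by_contra hcon
  push_neg at hcon
  have h0 : 0 < Int.fract x := lt_of_le_of_ne (Int.fract_nonneg x) (Ne.symm hx)
  rw [fract_nowrap x b (by linarith) (by linarith)] at h
  linarith

-- ===== core contradiction lemma (no close repeats) =====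
lemma core (j' p d L : ℕ) (hL : Phi (j'+2) ≤ L) (h2 : L < d) (h3 : d < Phi (j'+3))
    (heq : ∀ t < L, fibInf (p+t) = fibInf (p+d+t)) : False := by
  have hDl : ∀ t < L, Dl (p+t+1) = Dl (p+d+t+1) := fun t ht => Dl_eq_of_fibInf (heq t ht)
  set G : ℕ → ℤ := fun i => ⌊((i:ℝ) + d) * alf⌋ - ⌊(i:ℝ) * alf⌋ with hG
  have hGstep : ∀ i, G (i+1) = G i + (Dl (i+d) - Dl i) := by
    intro i
    simp only [hG, Dl]
    push_cast
    have e1 : ((i:ℝ) + 1 + d) * alf = (((i:ℝ) + (d:ℝ)) + 1) * alf := by ring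
    rw [e1]
    ring
  have hconst : ∀ t ≤ L, G (p+1+t) = G (p+1) := by
    intro t
    induction t with
    | zero => simp
    | succ t ih =>
      intro ht
      have hd := hDl t (by omega)
      have hstep := hGstep (p+1+t)
      rw [show p+1+t+d = p+d+t+1 by omega, show p+1+t = p+t+1 by omega] at hstep
      rw [show p+1+(t+1) = p+t+1+1 by omega]
      rw [hstep, hd]
      rw [show p+t+1 = p+1+t by omega]
      rw [ih (by omega)]
      ring
  set g : ℤ := G (p+1) with hg
  have hbound : ∀ t ≤ L, (g:ℝ) - d*alf ≤ Int.fract (((p+1+t:ℕ):ℝ) * alf)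
      ∧ Int.fract (((p+1+t:ℕ):ℝ) * alf) < (g:ℝ) + 1 - d*alf := by
    intro t ht
    have hGt : G (p+1+t) = g := hconst t ht
    have hfloor : ⌊(((p+1+t:ℕ):ℝ) + d) * alf⌋ = g + ⌊((p+1+t:ℕ):ℝ) * alf⌋ := by
      simp only [hG] at hGt
      omega
    have hl := Int.floor_le ((((p+1+t:ℕ):ℝ) + d) * alf)
    have hu := Int.lt_floor_add_one ((((p+1+t:ℕ):ℝ) + d) * alf)
    rw [hfloor] at hl hu
    rw [Int.cast_add] at hl hu
    have hexp : (((p+1+t:ℕ):ℝ) + ↑d) * alf = ((p+1+t:ℕ):ℝ) * alf + (d:ℝ) * alf := by ring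
    rw [hexp] at hl hu
    have hfr : Int.fract (((p+1+t:ℕ):ℝ) * alf) = ((p+1+t:ℕ):ℝ) * alf - ⌊((p+1+t:ℕ):ℝ) * alf⌋ := rfl
    constructor
    · rw [hfr]; linarith
    · rw [hfr]; linarith
  have hNg := Nlem j' d (by omega) h3 g
  have hNg1 := Nlem j' d (by omega) h3 (g+1)
  have hne : (d:ℝ)*alf ≠ (g:ℝ) := by
    intro h
    rw [h] at hNg
    simp at hNg
    linarith [sig_pow_pos (j'+2)]
  rcases lt_or_gt_of_ne hne with hlt | hgt
  · -- dα < g : all fract ≥ g - dα > σ^{j'+2}, contradict hit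
    have habs : (g:ℝ) - d*alf > sig^(j'+2) := by
      rw [abs_of_neg (by linarith : (d:ℝ)*alf - g < 0)] at hNg
      linarith
    obtain ⟨t, htb, hfr⟩ := hit (j'+2) (by omega) (((p+1:ℕ):ℝ) * alf)
    have hcast : ((p+1:ℕ):ℝ) * alf + (t:ℝ) * alf = ((p+1+t:ℕ):ℝ) * alf := by push_cast; ring
    rw [hcast] at hfr
    have hb := (hbound t (le_trans htb hL)).1
    linarith
  · -- dα > g
    have hdg : (d:ℝ)*alf - g > sig^(j'+2) := by
      rw [abs_of_pos (by linarith : (d:ℝ)*alf - g > 0)] at hNg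
      linarith
    have hlt1 : (d:ℝ)*alf < g + 1 := by
      have hb := (hbound 0 (by omega))
      have := Int.fract_nonneg (((p+1+0:ℕ):ℝ) * alf)
      linarith [hb.2]
    have habs1 : (g:ℝ) + 1 - d*alf > sig^(j'+2) := by
      rw [abs_of_neg (by push_cast; linarith : (d:ℝ)*alf - ((g+1:ℤ):ℝ) < 0)] at hNg1
      push_cast at hNg1
      linarith
    obtain ⟨t, htb, hfr⟩ := hit (j'+2) (by omega) (((p+1:ℕ):ℝ) * alf + sig^(j'+2))
    have hcast : ((p+1:ℕ):ℝ) * alf + sig^(j'+2) + (t:ℝ) * alf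
        = ((p+1+t:ℕ):ℝ) * alf + sig^(j'+2) := by push_cast; ring
    rw [hcast] at hfr
    have hwb := wrapback (((p+1+t:ℕ):ℝ) * alf) (sig^(j'+2)) (sig_pow_pos _)
      (lt_of_le_of_lt (sig_pow_le (show 2 ≤ j'+2 by omega)) (by nlinarith [sig_lt_one, sig_pos]))
      (fract_ne_zero (p+1+t) (by omega)) hfr
    have hb := (hbound t (le_trans htb hL)).2
    have hup : (g:ℝ) + 1 - d*alf < 1 - sig^(j'+2) := by linarith
    linarith



lemma phi_mono : StrictMono Phi := by
  apply strictMono_nat_of_lt_succ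
  intro n
  cases n with
  | zero => simp [phi0, phi1]
  | succ n => rw [phi2]; have := phi_pos n; omega

lemma fibWord_ne_nil (n : ℕ) : fibWord n ≠ [] := by
  intro h
  have := phi_pos n
  rw [Phi, h] at this
  simp at this

-- zimin algebra
lemma ziminWord_ne_nil (k : ℕ) (hk : 1 ≤ k) : ziminWord k ≠ [] := by
  obtain ⟨k', rfl⟩ : ∃ k', k = k' + 1 := ⟨k - 1, by omega⟩
  simp [ziminWord]

lemma ziminWord_len (k : ℕ) : k ≤ (ziminWord k).length := by
  induction k with
  | zero => simp
  | succ k ih => simp [ziminWord]; omega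

lemma ziminWord_mem_lt (k : ℕ) : ∀ x ∈ ziminWord k, x < k := by
  induction k with
  | zero => simp [ziminWord]
  | succ k ih =>
    intro x hx
    simp [ziminWord] at hx
    rcases hx with h | h | h
    · exact lt_trans (ih x h) (Nat.lt_succ_self k)
    · omega
    · exact lt_trans (ih x h) (Nat.lt_succ_self k)

lemma flatMap_len_ge {β : Type*} (h : ℕ → List β) (hne : ∀ i, h i ≠ []) (l : List ℕ) :
    l.length ≤ (l.flatMap h).length := by
  induction l with
  | nil => simp
  | cons a l ih =>
    simp only [List.flatMap_cons, List.length_append, List.length_cons]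
    have : 1 ≤ (h a).length := List.length_pos_iff.mpr (hne a)
    omega

lemma image_le_length {β : Type*} {m : ℕ} {w : List β} (h : IsZiminImage m w) : m ≤ w.length := by
  obtain ⟨f, hne, rfl⟩ := h
  exact le_trans (ziminWord_len m) (flatMap_len_ge f hne _)

lemma image_bddAbove {β : Type*} (w : List β) : BddAbove {k | IsZiminImage k w} :=
  ⟨w.length, fun _ h => image_le_length h⟩

lemma flatMap_congr {β : Type*} (l : List ℕ) (f g : ℕ → List β) (h : ∀ x ∈ l, f x = g x) :
    l.flatMap f = l.flatMap g := by
  induction l with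
  | nil => rfl
  | cons a l ih =>
    simp only [List.flatMap_cons]
    rw [h a (by simp), ih (fun x hx => h x (by simp [hx]))]

lemma zimin_down {β : Type*} {m : ℕ} {w : List β} (h : IsZiminImage (m+1) w) (hm : 1 ≤ m) :
    IsZiminImage m w := by
  obtain ⟨m', rfl⟩ : ∃ m', m = m' + 1 := ⟨m - 1, by omega⟩
  obtain ⟨f, hne, hw⟩ := h
  set V' := (ziminWord m').flatMap f with hV'
  refine ⟨fun i => if i = m' then f m' ++ V' ++ f (m'+1) ++ V' ++ f m' else f i, ?_, ?_⟩
  · intro i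
    by_cases hi : i = m' <;> simp [hi, hne i, hne m']
  · have hcongr : (ziminWord m').flatMap
        (fun i => if i = m' then f m' ++ V' ++ f (m'+1) ++ V' ++ f m' else f i)
        = V' := by
      rw [hV']
      apply flatMap_congr
      intro x hx
      have := ziminWord_mem_lt m' x hx
      simp [Nat.ne_of_lt this]
    show w = (ziminWord (m'+1)).flatMap _
    rw [show ziminWord (m'+1) = ziminWord m' ++ m' :: ziminWord m' from rfl]
    rw [List.flatMap_append, List.flatMap_cons, hcongr]
    simp only [if_pos rfl]
    rw [hw]
    rw [show ziminWord (m'+2) = ziminWord (m'+1) ++ (m'+1) :: ziminWord (m'+1) from rfl]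
    rw [List.flatMap_append, List.flatMap_cons]
    rw [show ziminWord (m'+1) = ziminWord m' ++ m' :: ziminWord m' from rfl]
    rw [List.flatMap_append, List.flatMap_cons]
    simp [List.append_assoc, hV']

lemma zimin_down_to {β : Type*} {m m' : ℕ} {w : List β} (h : IsZiminImage m w)
    (h1 : 1 ≤ m') (h2 : m' ≤ m) : IsZiminImage m' w := by
  induction m with
  | zero => omega
  | succ m ih =>
    rcases Nat.eq_or_lt_of_le h2 with rfl | hlt
    · exact h
    · exact ih (zimin_down h (by omega)) (by omega)

-- fib image construction
def hfib : ℕ → List Bool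
  | 0 => [false]
  | 1 => [true]
  | i + 2 => fibWord (2*i+1)

lemma hfib_ne : ∀ i, hfib i ≠ [] := by
  intro i
  match i with
  | 0 => simp [hfib]
  | 1 => simp [hfib]
  | i+2 => exact fibWord_ne_nil _

lemma fib_image : ∀ k, 1 ≤ k → (ziminWord k).flatMap hfib = fibWord (2*k - 2) := by
  intro k
  induction k with
  | zero => omega
  | succ k ih =>
    intro _
    rcases Nat.eq_zero_or_pos k with rfl | hk
    · simp [ziminWord, hfib, fibWord]
    rw [show ziminWord (k+1) = ziminWord k ++ k :: ziminWord k from rfl]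
    rw [List.flatMap_append, List.flatMap_cons, ih hk]
    rcases Nat.eq_or_lt_of_le hk with h1 | h1
    · -- k = 1
      have : k = 1 := h1.symm
      subst this
      show fibWord 0 ++ hfib 1 ++ _ = fibWord 2
      simp [hfib, fibWord]
    · -- k ≥ 2
      obtain ⟨k', rfl⟩ : ∃ k', k = k' + 2 := ⟨k - 2, by omega⟩
      show fibWord (2*(k'+2) - 2) ++ (hfib (k'+2) ++ fibWord (2*(k'+2) - 2)) = fibWord (2*(k'+3)-2)
      have e1 : 2*(k'+2) - 2 = 2*k'+2 := by omega
      have e2 : 2*(k'+3) - 2 = 2*k'+4 := by omega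
      rw [e1, e2]
      show fibWord (2*k'+2) ++ (fibWord (2*k'+1) ++ fibWord (2*k'+2)) = fibWord (2*k'+4)
      rw [show fibWord (2*k'+4) = fibWord (2*k'+3) ++ fibWord (2*k'+2) from rfl,
          show fibWord (2*k'+3) = fibWord (2*k'+2) ++ fibWord (2*k'+1) from rfl]
      simp [List.append_assoc]

lemma fibWord_image (k : ℕ) (hk : 1 ≤ k) : IsZiminImage k (fibWord (2*k-2)) :=
  ⟨hfib, hfib_ne, (fib_image k hk).symm⟩


lemma flatMap_ne_nil {β : Type*} (h : ℕ → List β) (hne : ∀ i, h i ≠ []) (l : List ℕ)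
    (hl : l ≠ []) : l.flatMap h ≠ [] := by
  have h1 := flatMap_len_ge h hne l
  intro hc
  rw [hc] at h1
  simp only [List.length_nil, Nat.le_zero] at h1
  exact hl (List.length_eq_zero_iff.mp h1)

lemma fibWord_win (N : ℕ) : fibWord N = win 0 (Phi N) := by
  rw [mech N]
  simp only [win]
  apply List.map_congr_left
  intro x _
  rw [Nat.zero_add, fibInf_ltr]

-- the Hard Lemma: a factor of F_∞ that is an image of Z_{m+1} has length ≥ Φ_{2m}
lemma HL : ∀ m p L, IsZiminImage (m+1) (win p L) → Phi (2*m) ≤ L := by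
  intro m
  induction m with
  | zero =>
    intro p L h
    obtain ⟨f, hne, hw⟩ := h
    have h1 := flatMap_len_ge f hne (ziminWord 1)
    rw [← hw, win_length] at h1
    have hz : (ziminWord 1).length = 1 := by simp [ziminWord]
    have h00 : Phi (2*0) = 1 := phi0
    omega
  | succ m IH =>
    intro p L h
    obtain ⟨f, hne, hw⟩ := h
    set V := (ziminWord (m+1)).flatMap f with hV
    have hflat : (ziminWord (m+2)).flatMap f = V ++ (f (m+1) ++ V) := by
      rw [show ziminWord (m+2) = ziminWord (m+1) ++ (m+1) :: ziminWord (m+1) from rfl]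
      rw [List.flatMap_append, List.flatMap_cons, hV]
    set Lv := V.length with hLvdef
    set M := (f (m+1)).length with hMdef
    have hM : 1 ≤ M := List.length_pos_iff.mpr (hne (m+1))
    have hLv : 1 ≤ Lv :=
      List.length_pos_iff.mpr (flatMap_ne_nil f hne _ (ziminWord_ne_nil (m+1) (by omega)))
    have hlen : L = Lv + (M + Lv) := by
      have hc := congrArg List.length hw
      rw [win_length, hflat] at hc
      simp only [List.length_append] at hc
      omega
    have hdec : win p L = win p Lv ++ (win (p+Lv) M ++ win (p+Lv+M) Lv) := by
      rw [hlen, win_append, win_append]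
    have hw2 : V ++ (f (m+1) ++ V) = win p Lv ++ (win (p+Lv) M ++ win (p+Lv+M) Lv) := by
      rw [← hflat, ← hw, hdec]
    obtain ⟨hVr, hrest⟩ := List.append_inj hw2 (by rw [win_length])
    obtain ⟨hfm, hVr2⟩ := List.append_inj hrest (by rw [win_length])
    have hVim : IsZiminImage (m+1) (win p Lv) := ⟨f, hne, by rw [← hVr]⟩
    have hIH := IH p Lv hVim
    set d := Lv + M with hd
    have heq : ∀ t < Lv, fibInf (p+t) = fibInf (p+d+t) := by
      have hww : win p Lv = win (p+d) Lv := by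
        rw [← hVr, hVr2]
        congr 1
        omega
      exact win_eq_imp hww
    by_cases hcase : Phi (2*m+1) ≤ d
    · have hsum : Phi (2*(m+1)) = Phi (2*m+1) + Phi (2*m) := by
        rw [show 2*(m+1) = 2*m+2 by omega]
        exact phi2 (2*m)
      omega
    · push_neg at hcase
      rcases Nat.eq_zero_or_pos m with rfl | hm
      · have := phi1
        have h20 : Phi (2*0+1) = Phi 1 := rfl
        omega
      · obtain ⟨j2, rfl⟩ : ∃ j2, m = j2 + 1 := ⟨m - 1, by omega⟩
        exfalso
        have hIH' : Phi (2*j2+2) ≤ Lv := by rwa [show 2*j2+2 = 2*(j2+1) by omega]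
        have hcase' : d < Phi (2*j2+3) := by
          rw [show (2*j2+3 : ℕ) = 2*(j2+1)+1 by omega]
          exact hcase
        exact core (2*j2) p d Lv hIH' (by omega) hcase' heq

lemma infix_win {u : List Bool} {n : ℕ} (h : u <:+: fibPrefix n) :
    ∃ p, u = win p u.length ∧ u.length ≤ n := by
  obtain ⟨s, t, hst⟩ := h
  rw [List.append_assoc] at hst
  have hlen : s.length + (u.length + t.length) = n := by
    have hc := congrArg List.length hst
    simp only [List.length_append, fibPrefix, List.length_map, List.length_range] at hc
    omega
  have hdec : fibPrefix n
      = win 0 s.length ++ (win s.length u.length ++ win (s.length + u.length) t.length) := by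
    rw [fibPrefix_win, ← hlen, win_append, win_append, Nat.zero_add]
  rw [hdec] at hst
  obtain ⟨hs, hrest⟩ := List.append_inj hst (by rw [win_length])
  obtain ⟨hu, ht⟩ := List.append_inj hrest (by rw [win_length])
  exact ⟨s.length, hu, by omega⟩


end ZFib

/-- Theorem 5 (combinatorial content): for `Φ_{2(k-1)} ≤ n < Φ_{2k}`, the maximal
rank of a Zimin pattern embeddable in `F_∞[1..n]` equals `k`, and it is attained
on the prefix `F_{2(k-1)}`, whose Zimin type is `k`. -/
theorem maxRank_zimin_fibPrefix (n k : ℕ) (hn : 1 ≤ n) (hk : 1 ≤ k)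
    (h1 : Phi (2 * (k - 1)) ≤ n) (h2 : n < Phi (2 * k)) :
    ziminEmbeds k (fibPrefix n) ∧
    (∀ m, ziminEmbeds m (fibPrefix n) → m ≤ k) ∧
    fibWord (2 * (k - 1)) <+: fibPrefix n ∧
    ziminType (fibWord (2 * (k - 1))) = k := by
  obtain ⟨K, rfl⟩ : ∃ K, k = K + 1 := ⟨k - 1, by omega⟩
  simp only [Nat.add_sub_cancel] at h1 ⊢
  have hFim : IsZiminImage (K+1) (fibWord (2*K)) := by
    have h := ZFib.fibWord_image (K+1) (by omega)
    rwa [show 2*(K+1)-2 = 2*K by omega] at h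
  have hpre : fibWord (2*K) <+: fibPrefix n := by
    rw [ZFib.fibPrefix_win, show n = Phi (2*K) + (n - Phi (2*K)) by omega,
      ZFib.win_append, ZFib.fibWord_win]
    exact ⟨_, rfl⟩
  refine ⟨⟨fibWord (2*K), hpre.isInfix, hFim⟩, ?_, hpre, ?_⟩
  · intro m hm
    by_contra hc
    push_neg at hc
    obtain ⟨u, hinf, him⟩ := hm
    have him2 : IsZiminImage (K+2) u := ZFib.zimin_down_to him (by omega) (by omega)
    obtain ⟨p, hu, hun⟩ := ZFib.infix_win hinf
    have hHL := ZFib.HL (K+1) p u.length (by rwa [← hu])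
    rw [show 2*(K+1) = 2*K+2 by omega] at hHL h2
    omega
  · apply _root_.le_antisymm
    · apply csSup_le ⟨K+1, hFim⟩
      intro m hm
      by_contra hc
      push_neg at hc
      have him2 : IsZiminImage (K+2) (fibWord (2*K)) := ZFib.zimin_down_to hm (by omega) (by omega)
      have hHL := ZFib.HL (K+1) 0 (Phi (2*K)) (by rwa [← ZFib.fibWord_win])
      have hmono := ZFib.phi_mono (show 2*K < 2*(K+1) by omega)
      omega
    · exact le_csSup (ZFib.image_bddAbove _) hFim
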